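/- arXiv:math/0412146 — 3 statements merged into one kernel-verified Lean document; each statement's English description precedes it below -/
import Mathlib

section
/- For every t ∈ (0,1), the series ∑_{i=1}^∞ X_1(t) X_2(t) ⋯ X_i(t) converges. -/
/-- Iterated logarithmic functions: `X 1 t = (1 - log t)⁻¹`, `X i = X 1 ∘ X (i-1)`. -/
noncomputable def X : ℕ → ℝ → ℝ
  | 0, t => t
  | n + 1, t => (1 - Real.log (X n t))⁻¹

/-- Padé-type lower bound for the logarithm: `log (1+e) ≥ 2e/(2+e)` for `e ≥ 0`. -/
lemma pade_log (e : ℝ) (he : 0 ≤ e) : 2 * e ≤ (2 + e) * Real.log (1 + e) := by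
  have key : MonotoneOn (fun x : ℝ => (2 + x) * Real.log (1 + x) - 2 * x) (Set.Ici 0) := by
    have hd : ∀ x : ℝ, 0 < 1 + x →
        HasDerivAt (fun x : ℝ => (2 + x) * Real.log (1 + x) - 2 * x)
          (1 * Real.log (1 + x) + (2 + x) * (1 / (1 + x)) - 2) x := by
      intro x hx
      have h1 : HasDerivAt (fun x : ℝ => 2 + x) 1 x := (hasDerivAt_id x).const_add 2
      have h2 : HasDerivAt (fun x : ℝ => 1 + x) 1 x := (hasDerivAt_id x).const_add 1
      have h3 : HasDerivAt (fun x : ℝ => Real.log (1 + x)) (1 / (1 + x)) x :=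
        h2.log hx.ne'
      have h4 : HasDerivAt (fun x : ℝ => 2 * x) 2 x := by
        simpa using (hasDerivAt_id x).const_mul 2
      exact (h1.mul h3).sub h4
    apply monotoneOn_of_deriv_nonneg (convex_Ici 0)
    · apply ContinuousOn.sub
      · apply ContinuousOn.mul
        · exact (continuous_const.add continuous_id).continuousOn
        · apply ContinuousOn.comp Real.continuousOn_log
            (continuous_const.add continuous_id).continuousOn
          intro x hx
          simp only [Set.mem_Ici] at hx
          simp only [Set.mem_compl_iff, Set.mem_singleton_iff]
          intro h; simp only [Pi.add_apply, id_eq] at h; linarith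
      · exact (continuous_const.mul continuous_id).continuousOn
    · intro x hx
      rw [interior_Ici] at hx
      have hx' : (0:ℝ) < x := hx
      exact ((hd x (by linarith)).differentiableAt).differentiableWithinAt
    · intro x hx
      rw [interior_Ici] at hx
      have hx' : (0:ℝ) < x := hx
      have h1x : (0:ℝ) < 1 + x := by linarith
      rw [(hd x h1x).deriv]
      have hlog : 1 - (1 + x)⁻¹ ≤ Real.log (1 + x) :=
        Real.one_sub_inv_le_log_of_pos h1x
      have hinv : (1 + x)⁻¹ = 1 / (1 + x) := (one_div _).symm
      have : x / (1 + x) ≤ Real.log (1 + x) := by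
        have : 1 - (1 + x)⁻¹ = x / (1 + x) := by field_simp; ring
        linarith [this ▸ hlog]
      have h2 : (2 + x) * (1 / (1 + x)) = 2 - x / (1 + x) := by field_simp; ring
      rw [h2]; linarith
  have h0 : (0:ℝ) ∈ Set.Ici (0:ℝ) := Set.self_mem_Ici
  have he' : e ∈ Set.Ici (0:ℝ) := he
  have := key h0 he' he
  simp only [add_zero, Real.log_one, mul_zero, sub_zero, mul_zero] at this
  linarith

theorem summable_prod_X (t : ℝ) (ht : t ∈ Set.Ioo (0:ℝ) 1) :
    Summable (fun i : ℕ => ∏ j ∈ Finset.Icc 1 (i + 1), X j t) := by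
  obtain ⟨ht0, ht1⟩ := ht
  -- All iterates stay in (0,1)
  have hX : ∀ n, X n t ∈ Set.Ioo (0:ℝ) 1 := by
    intro n
    induction n with
    | zero => exact ⟨ht0, ht1⟩
    | succ n ih =>
      have hlog : Real.log (X n t) < 0 := Real.log_neg ih.1 ih.2
      constructor
      · show (0:ℝ) < (1 - Real.log (X n t))⁻¹
        exact inv_pos.mpr (by linarith)
      · show (1 - Real.log (X n t))⁻¹ < 1
        rw [inv_lt_one_iff₀]
        right; linarith
  set E : ℕ → ℝ := fun n => -Real.log (X n t) with hEdef
  have hEpos : ∀ n, 0 < E n := by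
    intro n
    have := Real.log_neg (hX n).1 (hX n).2
    simp only [hEdef]; linarith
  have hXrec : ∀ n, X (n + 1) t = (1 + E n)⁻¹ := by
    intro n
    show (1 - Real.log (X n t))⁻¹ = (1 + -Real.log (X n t))⁻¹
    ring_nf
  have hErec : ∀ n, E (n + 1) = Real.log (1 + E n) := by
    intro n
    show -Real.log (X (n + 1) t) = Real.log (1 + E n)
    rw [hXrec n, Real.log_inv]; ring
  set P : ℕ → ℝ := fun n => ∏ j ∈ Finset.Icc 1 n, X j t with hPdef
  have hPpos : ∀ n, 0 < P n := fun n => Finset.prod_pos fun j _ => (hX j).1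
  have hP0 : P 0 = 1 := by simp [hPdef]
  have hPrec : ∀ n, P (n + 1) = P n * (1 + E n)⁻¹ := by
    intro n
    simp only [hPdef]
    rw [Finset.prod_Icc_succ_top (Nat.le_add_left 1 n), hXrec n]
  set G : ℕ → ℝ := fun n => 2 * P n / E n with hGdef
  have hGpos : ∀ n, 0 < G n := fun n =>
    div_pos (by linarith [hPpos n]) (hEpos n)
  have hstep : ∀ n, G (n + 1) + P (n + 1) ≤ G n := by
    intro n
    have he := hEpos n
    have h1e : (0:ℝ) < 1 + E n := by linarith
    have hL : 0 < Real.log (1 + E n) := Real.log_pos (by linarith)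
    have hpade := pade_log (E n) he.le
    have hp := hPpos n
    simp only [hGdef, hPrec, hErec]
    rw [div_add' _ _ _ hL.ne', div_le_div_iff₀ hL he]
    have key : 2 * (P n) * E n + P n * E n * Real.log (1 + E n)
        ≤ 2 * P n * (1 + E n) * Real.log (1 + E n) := by
      nlinarith [mul_le_mul_of_nonneg_left hpade hp.le,
        mul_pos hp hL, mul_pos hp he]
    have hexp : (2 * (P n * (1 + E n)⁻¹) + P n * (1 + E n)⁻¹ * Real.log (1 + E n)) * E n
        = (2 * P n * E n + P n * E n * Real.log (1 + E n)) * (1 + E n)⁻¹ := by ring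
    rw [hexp]
    rw [← sub_nonneg]
    have : 2 * P n * Real.log (1 + E n)
        - (2 * P n * E n + P n * E n * Real.log (1 + E n)) * (1 + E n)⁻¹
        = (2 * P n * (1 + E n) * Real.log (1 + E n)
          - (2 * P n * E n + P n * E n * Real.log (1 + E n))) * (1 + E n)⁻¹ := by
      field_simp
    rw [this]
    apply mul_nonneg (by linarith [key]) (inv_pos.mpr h1e).le
  have hsum : ∀ n, (∑ i ∈ Finset.range n, P (i + 1)) + G n ≤ G 0 := by
    intro n
    induction n with
    | zero => simp
    | succ n ih =>
      rw [Finset.sum_range_succ]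
      linarith [hstep n]
  apply summable_of_sum_range_le (c := G 0)
  · intro n
    exact (hPpos (n + 1)).le
  · intro n
    have := hsum n
    have := hGpos n
    calc (∑ i ∈ Finset.range n, ∏ j ∈ Finset.Icc 1 (i + 1), X j t)
        = ∑ i ∈ Finset.range n, P (i + 1) := rfl
      _ ≤ G 0 := by linarith [hsum n, hGpos n]
end

section
/- For every t ∈ (0,1), the series ∑_{i=1}^∞ X_1(t)^2 X_2(t)^2 ⋯ X_i(t)^2 converges. -/
lemma X_succ (n : ℕ) (t : ℝ) : X (n+1) t = (1 - Real.log (X n t))⁻¹ := rfl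

lemma X_one_mem (t : ℝ) (ht : t ∈ Set.Ioo (0:ℝ) 1) : 0 < X 1 t ∧ X 1 t < 1 := by
  have hlog : Real.log t < 0 := Real.log_neg ht.1 ht.2
  have h1 : 1 < 1 - Real.log (X 0 t) := by simp only [X]; linarith
  rw [X_succ]
  constructor
  · positivity
  · rw [inv_lt_one_iff₀]; right; exact h1

lemma X_bound (t : ℝ) (ht : t ∈ Set.Ioo (0:ℝ) 1) (c : ℝ) (hc : c = (1 - X 1 t)⁻¹) :
    ∀ n : ℕ, 0 < X (n+1) t ∧ X (n+1) t ≤ 1 - 1/((n:ℝ) + c) := by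
  obtain ⟨h0, h1⟩ := X_one_mem t ht
  have hc1 : 1 < c := by
    rw [hc]; rw [lt_inv_comm₀ (by norm_num) (by linarith)]; linarith
  intro n
  induction n with
  | zero =>
    refine ⟨h0, ?_⟩
    have : (1:ℝ) - X 1 t ≠ 0 := by linarith
    rw [hc]
    push_cast
    field_simp
    linarith
  | succ n ih =>
    obtain ⟨hp, hb⟩ := ih
    have hnc : (0:ℝ) < (n:ℝ) + c := by positivity
    have hlt1 : X (n+1) t < 1 := by
      have : 0 < 1/((n:ℝ)+c) := by positivity
      linarith
    have hlog : Real.log (X (n+1) t) ≤ X (n+1) t - 1 :=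
      Real.log_le_sub_one_of_pos hp
    have hden : 1 + 1/((n:ℝ)+c) ≤ 1 - Real.log (X (n+1) t) := by linarith
    have hdpos : (0:ℝ) < 1 + 1/((n:ℝ)+c) := by positivity
    rw [X_succ]
    constructor
    · have : 0 < 1 - Real.log (X (n+1) t) := lt_of_lt_of_le hdpos hden
      positivity
    · have h2 : (1 - Real.log (X (n+1) t))⁻¹ ≤ (1 + 1/((n:ℝ)+c))⁻¹ :=
        inv_anti₀ hdpos hden
      have h3 : (1 + 1/((n:ℝ)+c))⁻¹ = 1 - 1/((n:ℝ)+1+c) := by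
        have h4 : (n:ℝ) + 1 + c ≠ 0 := by positivity
        field_simp
        ring
      push_cast
      rw [← h3]
      exact h2

lemma prod_X_bound (t : ℝ) (ht : t ∈ Set.Ioo (0:ℝ) 1) (c : ℝ) (hc : c = (1 - X 1 t)⁻¹) :
    ∀ i : ℕ, ∏ j ∈ Finset.Icc 1 (i + 1), X j t ≤ (c-1)/((i:ℝ) + c) := by
  obtain ⟨h0, h1⟩ := X_one_mem t ht
  have hc1 : 1 < c := by
    rw [hc]; rw [lt_inv_comm₀ (by norm_num) (by linarith)]; linarith
  intro i
  induction i with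
  | zero =>
    simp only [Finset.Icc_self, Finset.prod_singleton, Nat.cast_zero, zero_add]
    have hcne : (1:ℝ) - X 1 t ≠ 0 := by linarith
    have : X 1 t = 1 - 1/c := by rw [hc]; field_simp; ring
    rw [this]
    have hcpos : (0:ℝ) < c := by linarith
    field_simp
    exact le_refl _
  | succ i ih =>
    push_cast
    rw [Finset.prod_Icc_succ_top (by omega : 1 ≤ i + 1 + 1)]
    have hX := X_bound t ht c hc (i+1)
    have hic : (0:ℝ) < (i:ℝ) + c := by positivity
    have hic1 : (0:ℝ) < (i:ℝ) + 1 + c := by positivity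
    have hpnn : 0 ≤ ∏ j ∈ Finset.Icc 1 (i + 1), X j t := by
      apply Finset.prod_nonneg
      intro j hj
      rw [Finset.mem_Icc] at hj
      obtain ⟨j, rfl⟩ : ∃ k, j = k + 1 := ⟨j - 1, by omega⟩
      exact (X_bound t ht c hc j).1.le
    have hXnn : 0 ≤ X (i+1+1) t := hX.1.le
    calc (∏ j ∈ Finset.Icc 1 (i + 1), X j t) * X (i+1+1) t
        ≤ ((c-1)/((i:ℝ) + c)) * (1 - 1/((i:ℝ)+1+c)) := by
          apply mul_le_mul ih ?_ hXnn (div_nonneg (by linarith) hic.le)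
          have := hX.2
          push_cast at this ⊢
          linarith
      _ = (c-1)/((i:ℝ)+1+c) := by
          field_simp
          ring
    
theorem summable_prod_X_sq (t : ℝ) (ht : t ∈ Set.Ioo (0:ℝ) 1) :
    Summable (fun i : ℕ => ∏ j ∈ Finset.Icc 1 (i + 1), (X j t) ^ 2) := by
  set c : ℝ := (1 - X 1 t)⁻¹ with hc
  obtain ⟨h0, h1⟩ := X_one_mem t ht
  have hc1 : 1 < c := by
    rw [hc]; rw [lt_inv_comm₀ (by norm_num) (by linarith)]; linarith
  have hsum : Summable (fun i : ℕ => (c-1)^2 * (1/((i:ℝ)+1)^2)) := by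
    apply Summable.mul_left
    have : Summable (fun n : ℕ => 1/(n:ℝ)^2) := by
      simpa using Real.summable_one_div_nat_pow.mpr (by norm_num : 1 < 2)
    exact ((summable_nat_add_iff 1).mpr this).congr (by intro n; push_cast; ring)
  apply Summable.of_nonneg_of_le _ _ hsum
  · intro i
    apply Finset.prod_nonneg
    intro j _
    positivity
  · intro i
    have hb := prod_X_bound t ht c hc i
    have hpnn : 0 ≤ ∏ j ∈ Finset.Icc 1 (i + 1), X j t := by
      apply Finset.prod_nonneg
      intro j hj
      rw [Finset.mem_Icc] at hj
      obtain ⟨j, rfl⟩ : ∃ k, j = k + 1 := ⟨j - 1, by omega⟩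
      exact (X_bound t ht c hc j).1.le
    have hic : (0:ℝ) < (i:ℝ) + c := by positivity
    have hic1 : (0:ℝ) < (i:ℝ) + 1 := by positivity
    calc ∏ j ∈ Finset.Icc 1 (i + 1), (X j t)^2
        = (∏ j ∈ Finset.Icc 1 (i + 1), X j t)^2 := by rw [Finset.prod_pow]
      _ ≤ ((c-1)/((i:ℝ) + c))^2 := by
          apply pow_le_pow_left₀ hpnn hb
      _ ≤ (c-1)^2 * (1/((i:ℝ)+1)^2) := by
          rw [div_pow]
          rw [div_le_iff₀ (by positivity)]
          have h5 : ((i:ℝ)+1)^2 ≤ ((i:ℝ)+c)^2 := by nlinarith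
          have h6 : 0 ≤ (c-1)^2 := sq_nonneg _
          calc (c-1)^2 = (c-1)^2 * (1/((i:ℝ)+1)^2) * ((i:ℝ)+1)^2 := by field_simp
            _ ≤ (c-1)^2 * (1/((i:ℝ)+1)^2) * ((i:ℝ)+c)^2 := by
                apply mul_le_mul_of_nonneg_left h5; positivity
end

section
/- For every m ≥ 1 and t ∈ (0,1), the derivative of η_m satisfies t · η_m'(t) = (1/2) ζ_m(t) + (1/2) η_m(t)^2, where η_m(t) = ∑_{i=1}^m X_1(t)⋯X_i(t) and ζ_m(t) = ∑_{i=1}^m X_1(t)^2⋯X_i(t)^2. -/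
noncomputable def eta (m : ℕ) (t : ℝ) : ℝ :=
  ∑ i ∈ Finset.Icc 1 m, ∏ j ∈ Finset.Icc 1 i, X j t

noncomputable def zeta (m : ℕ) (t : ℝ) : ℝ :=
  ∑ i ∈ Finset.Icc 1 m, ∏ j ∈ Finset.Icc 1 i, (X j t) ^ 2

noncomputable def Q (i : ℕ) (t : ℝ) : ℝ := ∏ j ∈ Finset.Icc 1 i, X j t

lemma X_mem (i : ℕ) {t : ℝ} (ht : t ∈ Set.Ioo (0:ℝ) 1) : X i t ∈ Set.Ioo (0:ℝ) 1 := by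
  induction i with
  | zero => exact ht
  | succ n ih =>
    have hlog : Real.log (X n t) < 0 := Real.log_neg ih.1 ih.2
    have h1 : (1:ℝ) < 1 - Real.log (X n t) := by linarith
    constructor
    · simp only [X]
      positivity
    · simp only [X]
      rw [inv_lt_one_iff₀]
      right; exact h1

lemma one_sub_log_pos (i : ℕ) {t : ℝ} (ht : t ∈ Set.Ioo (0:ℝ) 1) :
    (1:ℝ) < 1 - Real.log (X i t) := by
  have h := X_mem i ht
  have := Real.log_neg h.1 h.2
  linarith

lemma hasDerivAt_X (i : ℕ) {t : ℝ} (ht : t ∈ Set.Ioo (0:ℝ) 1) :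
    HasDerivAt (X i) (X i t * Q i t / t) t := by
  induction i with
  | zero =>
    have : X 0 t * Q 0 t / t = 1 := by
      simp [X, Q, div_self (ne_of_gt ht.1)]
    rw [this]
    exact hasDerivAt_id t
  | succ n ih =>
    have hx := X_mem n ht
    have hxne : X n t ≠ 0 := ne_of_gt hx.1
    have hlog := one_sub_log_pos n ht
    have hne : 1 - Real.log (X n t) ≠ 0 := by linarith
    have hcomp : HasDerivAt (fun s => Real.log (X n s)) ((X n t)⁻¹ * (X n t * Q n t / t)) t :=
      (Real.hasDerivAt_log hxne).comp t ih
    have hsub := hcomp.const_sub 1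
    have hinv := hsub.inv hne
    have hfun : (fun s => (1 - Real.log (X n s))⁻¹) = X (n + 1) := by
      funext s; simp [X]
    rw [show (fun x => 1 - Real.log (X n x))⁻¹ = fun s => (1 - Real.log (X n s))⁻¹ from rfl, hfun] at hinv
    refine hinv.congr_deriv ?_
    have hX1 : X (n + 1) t = (1 - Real.log (X n t))⁻¹ := rfl
    have hQ : Q (n + 1) t = Q n t * X (n + 1) t := by
      simp [Q, Finset.prod_Icc_succ_top (Nat.one_le_iff_ne_zero.mpr (Nat.succ_ne_zero n))]
    rw [hQ, hX1]
    field_simp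

lemma hasDerivAt_Q (i : ℕ) {t : ℝ} (ht : t ∈ Set.Ioo (0:ℝ) 1) :
    HasDerivAt (Q i) (Q i t * eta i t / t) t := by
  induction i with
  | zero =>
    have h1 : Q 0 = fun _ : ℝ => (1:ℝ) := by funext s; simp [Q]
    have h2 : Q 0 t * eta 0 t / t = 0 := by simp [Q, eta]
    rw [h2, h1]
    exact hasDerivAt_const t 1
  | succ n ih =>
    have hQfun : Q (n + 1) = fun s => Q n s * X (n + 1) s := by
      funext s
      simp [Q, Finset.prod_Icc_succ_top (Nat.one_le_iff_ne_zero.mpr (Nat.succ_ne_zero n))]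
    have h := ih.mul (hasDerivAt_X (n + 1) ht)
    rw [show (Q n * X (n + 1)) = fun s => Q n s * X (n + 1) s from rfl, ← hQfun] at h
    refine h.congr_deriv ?_
    have hQ : Q (n + 1) t = Q n t * X (n + 1) t := by rw [hQfun]
    have heta : eta (n + 1) t = eta n t + Q (n + 1) t := by
      simp [eta, Q, Finset.sum_Icc_succ_top (Nat.one_le_iff_ne_zero.mpr (Nat.succ_ne_zero n))]
    rw [heta, hQ]
    field_simp

lemma hasDerivAt_eta_aux (m : ℕ) {t : ℝ} (ht : t ∈ Set.Ioo (0:ℝ) 1) :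
    HasDerivAt (eta m) ((1 / 2 * zeta m t + 1 / 2 * (eta m t) ^ 2) / t) t := by
  induction m with
  | zero =>
    have h1 : eta 0 = fun _ : ℝ => (0:ℝ) := by funext s; simp [eta]
    have h2 : (1 / 2 * zeta 0 t + 1 / 2 * (eta 0 t) ^ 2) / t = 0 := by simp [eta, zeta]
    rw [h2, h1]
    exact hasDerivAt_const t 0
  | succ n ih =>
    have hetafun : eta (n + 1) = fun s => eta n s + Q (n + 1) s := by
      funext s
      simp [eta, Q, Finset.sum_Icc_succ_top (Nat.one_le_iff_ne_zero.mpr (Nat.succ_ne_zero n))]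
    have h := ih.add (hasDerivAt_Q (n + 1) ht)
    rw [show (eta n + Q (n + 1)) = fun s => eta n s + Q (n + 1) s from rfl, ← hetafun] at h
    refine h.congr_deriv ?_
    have heta : eta (n + 1) t = eta n t + Q (n + 1) t := by rw [hetafun]
    have hzeta : zeta (n + 1) t = zeta n t + (Q (n + 1) t) ^ 2 := by
      simp [zeta, Q, Finset.sum_Icc_succ_top (Nat.one_le_iff_ne_zero.mpr (Nat.succ_ne_zero n)),
        Finset.prod_pow]
    rw [heta, hzeta]
    field_simp
    ring

theorem hasDerivAt_eta (m : ℕ) (hm : 1 ≤ m) (t : ℝ) (ht : t ∈ Set.Ioo (0:ℝ) 1) :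
    HasDerivAt (eta m) ((1 / 2 * zeta m t + 1 / 2 * (eta m t) ^ 2) / t) t :=
  hasDerivAt_eta_aux m ht
end
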